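/- For any graph G, the PSD throttling number satisfies thr₊(G) ≤ min over m ≥ Z(G) of ( m + ⌈pt(G,m)/2⌉ ). -/

import Mathlib

namespace ZF

variable {V : Type*} [Fintype V] [DecidableEq V]

/-- A valid standard zero forcing force within the vertex set `U`, given blue set `B`:
`u` is blue, `v` is its unique white neighbor in `U`. -/
def ZFValid (G : SimpleGraph V) (U B : Set V) (u v : V) : Prop :=
  u ∈ U ∧ v ∈ U ∧ u ∈ B ∧ v ∉ B ∧ G.Adj u v ∧
    ∀ w ∈ U, G.Adj u w → w ∉ B → w = v

/-- `whiteConn G U B a b` : `a` and `b` are joined by a walk through white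
(non-blue) vertices of `U` (possibly trivial). -/
def whiteConn (G : SimpleGraph V) (U B : Set V) : V → V → Prop :=
  Relation.ReflTransGen (fun a b => G.Adj a b ∧ a ∈ U ∧ b ∈ U ∧ a ∉ B ∧ b ∉ B)

/-- A valid PSD force within the vertex set `U`, given blue set `B`:
`u` is blue and `v` is the unique neighbor of `u` in the component of the
white subgraph containing `v`. -/
def PSDValid (G : SimpleGraph V) (U B : Set V) (u v : V) : Prop :=
  u ∈ U ∧ v ∈ U ∧ u ∈ B ∧ v ∉ B ∧ G.Adj u v ∧
    ∀ w ∈ U, G.Adj u w → w ∉ B → whiteConn G U B v w → w = v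

/-- One propagation step for a generic color change rule `valid`. -/
def step (valid : Set V → V → V → Prop) (B : Set V) : Set V :=
  B ∪ {v | ∃ u, valid B u v}

/-- Iterated propagation. -/
def iter (valid : Set V → V → V → Prop) (B : Set V) : ℕ → Set V :=
  fun k => (step valid)^[k] B

/-- `B ⊆ U` is a forcing set of the induced subgraph on `U` for the rule `valid`. -/
def IsForcingSet (valid : Set V → V → V → Prop) (U B : Set V) : Prop :=
  B ⊆ U ∧ ∃ k, U ⊆ iter valid B k

/-- Propagation time of the set `B` for rule `valid` on the induced subgraph on `U`. -/
noncomputable def propTime (valid : Set V → V → V → Prop) (U B : Set V) : ℕ :=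
  sInf {k | U ⊆ iter valid B k}

/-- Vertices blue after `k` time-steps of the family of forces `F`, starting from `B`. -/
def expand (B : Set V) (F : ℕ → Set (V × V)) : ℕ → Set V
  | 0 => B
  | k + 1 => expand B F k ∪ {v | ∃ u, (u, v) ∈ F (k + 1)}

/-- A relaxed chronology of forces (for the rule `valid`) for the forcing set `B`
on the induced subgraph on `U`, with completion time `K`: at each time-step an
arbitrary subset of the currently valid forces is performed (no vertex being
forced twice in one step), and all of `U` is blue after step `K`. -/
structure RelaxedChron (valid : Set V → V → V → Prop) (U B : Set V)
    (K : ℕ) (F : ℕ → Set (V × V)) : Prop where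
  subset : B ⊆ U
  init : F 0 = ∅
  bound : ∀ k, K < k → F k = ∅
  forcesValid : ∀ k < K, ∀ u v, (u, v) ∈ F (k + 1) → valid (expand B F k) u v
  uniqueForcer : ∀ k u₁ u₂ v, (u₁, v) ∈ F k → (u₂, v) ∈ F k → u₁ = u₂
  complete : U ⊆ expand B F K

/-- The underlying set of forces of a relaxed chronology. -/
def forcesOf (F : ℕ → Set (V × V)) (K : ℕ) : Set (V × V) :=
  {p | ∃ k, 1 ≤ k ∧ k ≤ K ∧ p ∈ F k}

/-- The terminus of a relaxed chronology: the vertices (of `U`) performing no force. -/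
def terminus (U : Set V) (F : ℕ → Set (V × V)) (K : ℕ) : Set V :=
  {v ∈ U | ∀ u, (v, u) ∉ forcesOf F K}

/-- The reversal of a relaxed chronology: each force is reversed and
the order of the time-steps is reversed. -/
def revChron (F : ℕ → Set (V × V)) (K : ℕ) : ℕ → Set (V × V) :=
  fun k => if 1 ≤ k ∧ k ≤ K then {p | (p.2, p.1) ∈ F (K - k + 1)} else ∅

/-- One round of performing all currently valid forces from the set of forces `S`. -/
def forceStep (valid : Set V → V → V → Prop) (S : Set (V × V)) (B : Set V) : Set V :=
  B ∪ {v | ∃ u, (u, v) ∈ S ∧ valid B u v}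

def forceIter (valid : Set V → V → V → Prop) (S : Set (V × V)) (B : Set V) : ℕ → Set V :=
  fun t => (forceStep valid S)^[t] B

/-- Propagation time of a set of forces `S` for starting set `B` on `U`. -/
noncomputable def ptForces (valid : Set V → V → V → Prop) (U : Set V)
    (S : Set (V × V)) (B : Set V) : ℕ :=
  sInf {t | U ⊆ forceIter valid S B t}

/-- `v` is active at time-step `k` of the relaxed chronology `F`:
it is blue after step `k` and has not yet performed a force. -/
def activeAt (B : Set V) (F : ℕ → Set (V × V)) (v : V) (k : ℕ) : Prop :=
  v ∈ expand B F k ∧ ∀ j ≤ k, ∀ u, (v, u) ∉ F j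

/-- The zero forcing number. -/
noncomputable def Z (G : SimpleGraph V) : ℕ :=
  sInf {n | ∃ B : Set V, B.ncard = n ∧ IsForcingSet (ZFValid G Set.univ) Set.univ B}

/-- The PSD forcing number. -/
noncomputable def Zplus (G : SimpleGraph V) : ℕ :=
  sInf {n | ∃ B : Set V, B.ncard = n ∧ IsForcingSet (PSDValid G Set.univ) Set.univ B}

/-- Standard `m`-propagation time `pt(G,m)`. -/
noncomputable def ptm (G : SimpleGraph V) (m : ℕ) : ℕ :=
  sInf {t | ∃ B : Set V, B.ncard = m ∧ IsForcingSet (ZFValid G Set.univ) Set.univ B ∧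
    propTime (ZFValid G Set.univ) Set.univ B = t}

/-- PSD `m`-propagation time `pt₊(G,m)`. -/
noncomputable def ptplusm (G : SimpleGraph V) (m : ℕ) : ℕ :=
  sInf {t | ∃ B : Set V, B.ncard = m ∧ IsForcingSet (PSDValid G Set.univ) Set.univ B ∧
    propTime (PSDValid G Set.univ) Set.univ B = t}

/-- Standard propagation time `pt(G)`. -/
noncomputable def pt (G : SimpleGraph V) : ℕ := ptm G (Z G)

/-- PSD propagation time `pt₊(G)`. -/
noncomputable def ptplus (G : SimpleGraph V) : ℕ := ptplusm G (Zplus G)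

/-- PSD throttling number `thr₊(G)`. -/
noncomputable def thrplus (G : SimpleGraph V) : ℕ :=
  sInf {t | ∃ B : Set V, IsForcingSet (PSDValid G Set.univ) Set.univ B ∧
    t = B.ncard + propTime (PSDValid G Set.univ) Set.univ B}

/-- Closed neighborhood of a set. -/
def closedNbhd (G : SimpleGraph V) (B : Set V) : Set V :=
  B ∪ {v | ∃ u ∈ B, G.Adj u v}

/-- Power domination process: the first step colors the closed neighborhood,
subsequent steps apply the standard zero forcing rule. -/
def pdIter (G : SimpleGraph V) (B : Set V) : ℕ → Set V
  | 0 => B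
  | 1 => closedNbhd G B
  | (k + 2) => step (ZFValid G Set.univ) (pdIter G B (k + 1))

/-- `B` is a power dominating set. -/
def IsPDSet (G : SimpleGraph V) (B : Set V) : Prop :=
  ∃ k, Set.univ ⊆ pdIter G B k

/-- Power propagation time of a set. -/
noncomputable def pdPropTime (G : SimpleGraph V) (B : Set V) : ℕ :=
  sInf {k | Set.univ ⊆ pdIter G B k}

/-- Power `m`-propagation time `ppt(G,m)`. -/
noncomputable def pptm (G : SimpleGraph V) (m : ℕ) : ℕ :=
  sInf {t | ∃ B : Set V, B.ncard = m ∧ IsPDSet G B ∧ pdPropTime G B = t}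

/-- Restriction of a family of forces to those with both endpoints in `W`. -/
def restrictF (F : ℕ → Set (V × V)) (W : Set V) : ℕ → Set (V × V) :=
  fun k => {p ∈ F k | p.1 ∈ W ∧ p.2 ∈ W}

/-- The forcing tree of `b` : all vertices reachable from `b` by a chain of forces in `S`. -/
def treeOf (S : Set (V × V)) (b : V) : Set V :=
  {w | Relation.ReflTransGen (fun a c => (a, c) ∈ S) b w}

open Classical in
/-- The endpoint, after `k` steps, of the path grown from `b ∈ B` in the
path bundle of the relaxed chronology `F` induced by the vertex `x`: the path is
extended by a force from its current endpoint into the component of white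
vertices containing `x`, whenever such a force occurs. -/
noncomputable def lastVert (G : SimpleGraph V) (B : Set V) (F : ℕ → Set (V × V))
    (x : V) (b : V) : ℕ → V
  | 0 => b
  | k + 1 =>
    if h : ∃ w, (lastVert G B F x b k, w) ∈ F (k + 1) ∧ x ∉ expand B F k ∧
        whiteConn G Set.univ (expand B F k) x w
    then h.choose else lastVert G B F x b k

/-- The vertex set of the path bundle of `F` induced by `x`. -/
def bundle (G : SimpleGraph V) (B : Set V) (F : ℕ → Set (V × V)) (x : V) (K : ℕ) : Set V :=
  {v | ∃ b ∈ B, ∃ j ≤ K, lastVert G B F x b j = v}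

/-- The path of the bundle grown from `b`, as a list of vertices. -/
noncomputable def bundlePath (G : SimpleGraph V) (B : Set V) (F : ℕ → Set (V × V))
    (x : V) (K : ℕ) (b : V) : List V :=
  ((List.range (K + 1)).map (lastVert G B F x b)).dedup

/-- A nonempty path in `G`, given as a list of distinct consecutively adjacent vertices. -/
def IsPathList (G : SimpleGraph V) (l : List V) : Prop :=
  l ≠ [] ∧ l.Nodup ∧ l.Chain' G.Adj

/-- `P` is an `(α,β)`-linkage: a collection of pairwise vertex-disjoint paths,
`α` consisting of one endpoint of each path and `β` of the other endpoints. -/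
def IsLinkage (G : SimpleGraph V) (α β : Set V) (P : Set (List V)) : Prop :=
  (∀ l ∈ P, IsPathList G l) ∧
  (∀ l ∈ P, ∀ l' ∈ P, l ≠ l' → ∀ v, v ∈ l → v ∉ l') ∧
  (∀ l ∈ P, ∀ l' ∈ P, l.head? = l'.head? → l = l') ∧
  (∀ l ∈ P, ∀ l' ∈ P, l.getLast? = l'.getLast? → l = l') ∧
  α = {v | ∃ l ∈ P, l.head? = some v} ∧
  β = {v | ∃ l ∈ P, l.getLast? = some v}

/-- `P` is a rigid linkage: for some `α`, `β` it is the unique `(α,β)`-linkage in `G`. -/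
def IsRigidLinkage (G : SimpleGraph V) (P : Set (List V)) : Prop :=
  ∃ α β, IsLinkage G α β P ∧ ∀ P', IsLinkage G α β P' → P' = P

/-- A path cover of `G` : `m` vertex-disjoint induced paths covering all vertices,
the `i`-th path having vertices `vtx i 0, …, vtx i (n i − 1)` in path order. -/
structure IsPathCover (G : SimpleGraph V) (m : ℕ) (n : Fin m → ℕ)
    (vtx : (i : Fin m) → Fin (n i) → V) : Prop where
  pos : ∀ i, 0 < n i
  inj : Function.Injective (fun p : (i : Fin m) × Fin (n i) => vtx p.1 p.2)
  cover : ∀ v : V, ∃ i j, vtx i j = v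
  induced : ∀ i (j j' : Fin (n i)),
    G.Adj (vtx i j) (vtx i j') ↔ ((j : ℕ) + 1 = (j' : ℕ) ∨ (j' : ℕ) + 1 = (j : ℕ))

/-- A witness that a path cover is a parallel increasing path cover: a collection of
block partitions of `{0,…,K}`, one per path, compatible with the edges of `G`. -/
structure IsPIPWitness (G : SimpleGraph V) (m : ℕ) (n : Fin m → ℕ)
    (vtx : (i : Fin m) → Fin (n i) → V) (K : ℕ)
    (A : (i : Fin m) → Fin (n i) → Finset ℕ) : Prop where
  mem : ∀ i j, A i j ⊆ Finset.range (K + 1)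
  nonempty : ∀ i j, (A i j).Nonempty
  partition : ∀ i, ∀ x ∈ Finset.range (K + 1), ∃! j, x ∈ A i j
  mono : ∀ i (j j' : Fin (n i)), (j : ℕ) < (j' : ℕ) → ∀ x ∈ A i j, ∀ y ∈ A i j', x < y
  edge : ∀ (i i' : Fin m) j j', i ≠ i' →
    G.Adj (vtx i j) (vtx i' j') → ((A i j) ∩ (A i' j')).Nonempty

/-- A parallel increasing path cover of `G`. -/
def IsPIP (G : SimpleGraph V) (m : ℕ) (n : Fin m → ℕ)
    (vtx : (i : Fin m) → Fin (n i) → V) : Prop :=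
  IsPathCover G m n vtx ∧ ∃ K A, IsPIPWitness G m n vtx K A

/-- The path cover given by `vtx` is the chain set of the family of forces `F` :
the underlying forces are exactly the consecutive pairs along the paths. -/
def IsChainSetOf (m : ℕ) (n : Fin m → ℕ) (vtx : (i : Fin m) → Fin (n i) → V)
    (F : ℕ → Set (V × V)) (K : ℕ) : Prop :=
  ∀ u w, (u, w) ∈ forcesOf F K ↔
    ∃ (i : Fin m) (j : Fin (n i)) (j' : Fin (n i)),
      u = vtx i j ∧ w = vtx i j' ∧ (j : ℕ) + 1 = (j' : ℕ)

end ZF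

namespace ThrAux
open ZF Set

set_option linter.unusedSectionVars false

variable {V : Type*} [Fintype V] [DecidableEq V]

lemma iter_zero (valid : Set V → V → V → Prop) (B : Set V) :
    iter valid B 0 = B := rfl

lemma iter_succ (valid : Set V → V → V → Prop) (B : Set V) (k : ℕ) :
    iter valid B (k + 1) = step valid (iter valid B k) :=
  Function.iterate_succ_apply' _ _ _

lemma subset_step (valid : Set V → V → V → Prop) (B : Set V) :
    B ⊆ step valid B := Set.subset_union_left

lemma iter_le_iter (valid : Set V → V → V → Prop) (B : Set V) {k l : ℕ} (h : k ≤ l) :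
    iter valid B k ⊆ iter valid B l := by
  obtain ⟨d, rfl⟩ := Nat.exists_eq_add_of_le h
  clear h
  induction d with
  | zero => exact subset_rfl
  | succ d ih =>
      rw [show k + (d + 1) = (k + d) + 1 from rfl, iter_succ]
      exact ih.trans (subset_step _ _)

/-- Monotonicity property of a color change rule. -/
def MonoRule (valid : Set V → V → V → Prop) : Prop :=
  ∀ ⦃B B' : Set V⦄, B ⊆ B' → ∀ u v, valid B u v → v ∉ B' → valid B' u v

lemma whiteConn_mono (G : SimpleGraph V) {U B B' : Set V} (h : B ⊆ B') {a b : V}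
    (hc : whiteConn G U B' a b) : whiteConn G U B a b := by
  refine Relation.ReflTransGen.mono ?_ _ _ hc
  rintro x y ⟨h1, h2, h3, h4, h5⟩
  exact ⟨h1, h2, h3, fun hx => h4 (h hx), fun hy => h5 (h hy)⟩

lemma whiteConn_symm (G : SimpleGraph V) {U B : Set V} {a b : V}
    (hc : whiteConn G U B a b) : whiteConn G U B b a := by
  refine (@Relation.ReflTransGen.stdSymm _ _ ⟨?_⟩).symm _ _ hc
  rintro x y ⟨h1, h2, h3, h4, h5⟩
  exact ⟨h1.symm, h3, h2, h5, h4⟩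

lemma zf_mono (G : SimpleGraph V) : MonoRule (ZFValid G (Set.univ : Set V)) := by
  rintro B B' hs u v ⟨h1, h2, h3, h4, h5, h6⟩ hv
  exact ⟨h1, h2, hs h3, hv, h5, fun w hw hadj hw' => h6 w hw hadj (fun hwB => hw' (hs hwB))⟩

lemma psd_mono (G : SimpleGraph V) : MonoRule (PSDValid G (Set.univ : Set V)) := by
  rintro B B' hs u v ⟨h1, h2, h3, h4, h5, h6⟩ hv
  refine ⟨h1, h2, hs h3, hv, h5, fun w hw hadj hw' hconn =>
    h6 w hw hadj (fun hwB => hw' (hs hwB)) (whiteConn_mono G hs hconn)⟩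

lemma step_mono {valid : Set V → V → V → Prop} (hval : MonoRule valid)
    {B B' : Set V} (hs : B ⊆ B') : step valid B ⊆ step valid B' := by
  rintro v (hv | ⟨u, hu⟩)
  · exact Or.inl (hs hv)
  · by_cases hv : v ∈ B'
    · exact Or.inl hv
    · exact Or.inr ⟨u, hval hs u v hu hv⟩

lemma iter_mono {valid : Set V → V → V → Prop} (hval : MonoRule valid)
    {B B' : Set V} (hs : B ⊆ B') (k : ℕ) : iter valid B k ⊆ iter valid B' k := by
  induction k with
  | zero => exact hs
  | succ k ih => rw [iter_succ, iter_succ]; exact step_mono hval ih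

lemma forcing_mono (G : SimpleGraph V) {B B' : Set V}
    (hB : IsForcingSet (ZFValid G (Set.univ : Set V)) Set.univ B) (hs : B ⊆ B') :
    IsForcingSet (ZFValid G (Set.univ : Set V)) Set.univ B' := by
  obtain ⟨-, k, hk⟩ := hB
  exact ⟨Set.subset_univ _, k, hk.trans (iter_mono (zf_mono G) hs k)⟩

variable (G : SimpleGraph V) (B : Set V)

/-- Time at which `v` becomes blue in the standard ZF process from `B`. -/
noncomputable def tau (v : V) : ℕ :=
  sInf {k | v ∈ iter (ZFValid G (Set.univ : Set V)) B k}

open Classical in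
/-- The chosen forcer of `v`. -/
noncomputable def ff (v : V) : V :=
  if h : ∃ u, ZFValid G (Set.univ : Set V)
      (iter (ZFValid G (Set.univ : Set V)) B (tau G B v - 1)) u v then h.choose else v

variable {G B}
variable (hB : IsForcingSet (ZFValid G (Set.univ : Set V)) Set.univ B)

section WithForcing
include hB

lemma exists_reach (v : V) : ∃ k, v ∈ iter (ZFValid G (Set.univ : Set V)) B k := by
  obtain ⟨-, k, hk⟩ := hB
  exact ⟨k, hk (Set.mem_univ v)⟩

lemma mem_iter_tau (v : V) : v ∈ iter (ZFValid G (Set.univ : Set V)) B (tau G B v) :=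
  Nat.sInf_mem (exists_reach hB v)

lemma mem_iter_iff {v : V} {k : ℕ} :
    v ∈ iter (ZFValid G (Set.univ : Set V)) B k ↔ tau G B v ≤ k := by
  constructor
  · exact fun h => Nat.sInf_le h
  · exact fun h => iter_le_iter _ _ h (mem_iter_tau hB v)

lemma tau_eq_zero_iff {v : V} : tau G B v = 0 ↔ v ∈ B := by
  rw [← Nat.le_zero, ← mem_iter_iff hB, iter_zero]

lemma tau_pos {v : V} (hv : v ∉ B) : 1 ≤ tau G B v := by
  have := (tau_eq_zero_iff hB (v := v)).not.2 hv
  omega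

lemma ff_spec {v : V} (hv : v ∉ B) :
    ZFValid G (Set.univ : Set V)
      (iter (ZFValid G (Set.univ : Set V)) B (tau G B v - 1)) (ff G B v) v := by
  have h1 : 1 ≤ tau G B v := tau_pos hB hv
  have h2 : v ∈ iter (ZFValid G (Set.univ : Set V)) B ((tau G B v - 1) + 1) := by
    rw [show tau G B v - 1 + 1 = tau G B v by omega]
    exact mem_iter_tau hB v
  have h3 : v ∉ iter (ZFValid G (Set.univ : Set V)) B (tau G B v - 1) := by
    rw [mem_iter_iff hB]; omega
  rw [iter_succ] at h2
  rcases h2 with h2 | ⟨u, hu⟩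
  · exact absurd h2 h3
  · have hex : ∃ u, ZFValid G (Set.univ : Set V)
        (iter (ZFValid G (Set.univ : Set V)) B (tau G B v - 1)) u v := ⟨u, hu⟩
    unfold ff
    rw [dif_pos hex]
    exact hex.choose_spec

lemma adj_ff {v : V} (hv : v ∉ B) : G.Adj (ff G B v) v :=
  (ff_spec hB hv).2.2.2.2.1

lemma tau_ff_lt {v : V} (hv : v ∉ B) : tau G B (ff G B v) < tau G B v := by
  have h1 : 1 ≤ tau G B v := tau_pos hB hv
  have h2 := (ff_spec hB hv).2.2.1
  rw [mem_iter_iff hB] at h2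
  omega

lemma keyB {v x : V} (hv : v ∉ B) (hadj : G.Adj (ff G B v) x) (hne : x ≠ v) :
    tau G B x ≤ tau G B v - 1 := by
  by_contra hgt
  refine hne ((ff_spec hB hv).2.2.2.2.2 x (Set.mem_univ x) hadj ?_)
  rw [mem_iter_iff hB]; omega

lemma ff_inj {v₁ v₂ : V} (h1 : v₁ ∉ B) (h2 : v₂ ∉ B) (he : ff G B v₁ = ff G B v₂) :
    v₁ = v₂ := by
  by_contra hne
  have a1 : G.Adj (ff G B v₁) v₂ := by rw [he]; exact adj_ff hB h2
  have a2 : G.Adj (ff G B v₂) v₁ := by rw [← he]; exact adj_ff hB h1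
  have k1 := keyB hB h1 a1 (fun h => hne h.symm)
  have k2 := keyB hB h2 a2 hne
  have p1 := tau_pos hB h1
  have p2 := tau_pos hB h2
  omega

end WithForcing

variable (G B) in
/-- Vertices that are backward-blue at step `s` of the two-sided PSD process. -/
def Rset (T s : ℕ) : Set V :=
  {v | tau G B v ≤ T ∧ ∀ y, y ∉ B → ff G B y = v → T - s < tau G B y}

variable (G B) in
/-- Claimed blue set at step `s` of the two-sided PSD process. -/
def Xset (T s : ℕ) : Set V :=
  Rset G B T s ∪ {v | T < tau G B v ∧ tau G B v ≤ T + s}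

include hB in
lemma pastWhite {T s : ℕ} {v : V} (hx : v ∉ Xset G B T s) (hτ : tau G B v ≤ T) :
    ∃ y, y ∉ B ∧ ff G B y = v ∧ tau G B y ≤ T - s := by
  have hR : v ∉ Rset G B T s := fun h => hx (Or.inl h)
  rw [Rset, Set.mem_setOf_eq] at hR
  push_neg at hR
  obtain ⟨y, hy1, hy2, hy3⟩ := hR hτ
  exact ⟨y, hy1, hy2, by omega⟩

include hB in
lemma sep {T s : ℕ} {v x : V} (h : whiteConn G Set.univ (Xset G B T s) v x)
    (hv : tau G B v ≤ T) : tau G B x ≤ T := by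
  induction h with
  | refl => exact hv
  | tail hab hbc ih =>
      rename_i b c
      obtain ⟨hadj, -, -, hbX, hcX⟩ := hbc
      obtain ⟨y, hy1, hy2, hy3⟩ := pastWhite hB hbX ih
      by_cases hcy : c = y
      · subst hcy; omega
      · have : G.Adj (ff G B y) c := by rw [hy2]; exact hadj
        have := keyB hB hy1 this hcy
        omega

include hB in
lemma Xstep (T s : ℕ) :
    Xset G B T (s + 1) ⊆ step (PSDValid G (Set.univ : Set V)) (Xset G B T s) := by
  intro v hv
  by_cases hvX : v ∈ Xset G B T s
  · exact Or.inl hvX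
  rcases hv with hR | hF
  · -- backward (past) case
    obtain ⟨hτv, hall⟩ := hR
    obtain ⟨y, hyB, hfy, hτy⟩ := pastWhite hB hvX hτv
    have h1 : T - (s + 1) < tau G B y := hall y hyB hfy
    have hτy1 : 1 ≤ tau G B y := tau_pos hB hyB
    have hys : tau G B y = T - s := by omega
    refine Or.inr ⟨y, Set.mem_univ y, Set.mem_univ v, ?_, hvX, ?_, ?_⟩
    · refine Or.inl ⟨by omega, fun z hzB hfz => ?_⟩
      have := tau_ff_lt hB hzB
      rw [hfz] at this
      omega
    · have := adj_ff hB hyB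
      rw [hfy] at this
      exact this.symm
    · intro w _ hadj hwX hconn
      by_contra hne
      have hτw : tau G B w ≤ T := sep hB hconn hτv
      obtain ⟨z, hzB, hfz, hτz⟩ := pastWhite hB hwX hτw
      have hyz : y ≠ z := by
        intro h
        exact hne (by rw [← hfz, ← h, hfy])
      have hadj' : G.Adj (ff G B z) y := by rw [hfz]; exact hadj.symm
      have := keyB hB hzB hadj' hyz
      have := tau_pos hB hzB
      omega
  · -- forward (future) case
    obtain ⟨hτv1, hτv2⟩ := hF
    have hτv : tau G B v = T + s + 1 := by
      have : ¬ tau G B v ≤ T + s := fun h => hvX (Or.inr ⟨hτv1, h⟩)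
      omega
    have hvB : v ∉ B := by
      intro h
      have := (tau_eq_zero_iff hB).2 h
      omega
    refine Or.inr ⟨ff G B v, Set.mem_univ _, Set.mem_univ _, ?_, hvX, adj_ff hB hvB, ?_⟩
    · have hτu : tau G B (ff G B v) < tau G B v := tau_ff_lt hB hvB
      by_cases hc : tau G B (ff G B v) ≤ T
      · refine Or.inl ⟨hc, fun z hzB hfz => ?_⟩
        have hz : z = v := ff_inj hB hzB hvB (by rw [hfz])
        subst hz
        omega
      · exact Or.inr ⟨by omega, by omega⟩
    · intro w _ hadj hwX hconn
      by_contra hne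
      have hτw : tau G B w ≤ tau G B v - 1 := keyB hB hvB hadj hne
      have hτwT : tau G B w ≤ T := by
        by_contra hgt
        exact hwX (Or.inr ⟨by omega, by omega⟩)
      have := sep hB (whiteConn_symm G hconn) hτwT
      omega

lemma X_zero (T : ℕ) : Xset G B T 0 ⊆ Rset G B T 0 := by
  rintro v (h | ⟨h1, h2⟩)
  · exact h
  · omega

include hB in
lemma X_subset_iterPSD (T : ℕ) :
    ∀ s, Xset G B T s ⊆ iter (PSDValid G (Set.univ : Set V)) (Rset G B T 0) s := by
  intro s
  induction s with
  | zero => exact X_zero T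
  | succ s ih =>
      rw [iter_succ]
      exact (Xstep hB T s).trans (step_mono (psd_mono G) ih)

include hB in
lemma univ_sub_X {T : ℕ}
    (hT : propTime (ZFValid G (Set.univ : Set V)) Set.univ B ≤ 2 * T) :
    (Set.univ : Set V) ⊆ Xset G B T T := by
  intro v _
  have hne : {k | (Set.univ : Set V) ⊆ iter (ZFValid G (Set.univ : Set V)) B k}.Nonempty :=
    hB.2
  have hp := Nat.sInf_mem hne
  have hτ : tau G B v ≤ propTime (ZFValid G (Set.univ : Set V)) Set.univ B :=
    (mem_iter_iff hB).1 (hp (Set.mem_univ v))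
  by_cases h : tau G B v ≤ T
  · exact Or.inl ⟨h, fun y hyB _ => by have := tau_pos hB hyB; omega⟩
  · exact Or.inr ⟨by omega, by omega⟩

variable (G B) in
open Classical in
/-- Descend `n` steps along forcers until reaching `B`. -/
noncomputable def gAux : ℕ → V → V
  | 0, v => v
  | n + 1, v => if v ∈ B then v else gAux n (ff G B v)

/-- Forcing-chain descent relation. -/
def Desc (G : SimpleGraph V) (B : Set V) : V → V → Prop :=
  Relation.ReflTransGen (fun a b => a ∉ B ∧ ff G B a = b)

include hB in
lemma desc_tau {a b : V} (h : Desc G B a b) : tau G B b ≤ tau G B a := by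
  induction h with
  | refl => exact le_rfl
  | tail _ hbc ih =>
      obtain ⟨hb, hfb⟩ := hbc
      have := tau_ff_lt hB hb
      rw [hfb] at this
      omega

include hB in
lemma gAux_spec : ∀ n (v : V), tau G B v ≤ n → gAux G B n v ∈ B ∧ Desc G B v (gAux G B n v) := by
  intro n
  induction n with
  | zero =>
      intro v hv
      have : v ∈ B := (tau_eq_zero_iff hB).1 (by omega)
      exact ⟨this, Relation.ReflTransGen.refl⟩
  | succ n ih =>
      intro v hv
      by_cases hvB : v ∈ B
      · simp only [gAux, if_pos hvB]
        exact ⟨hvB, Relation.ReflTransGen.refl⟩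
      · simp only [gAux, if_neg hvB]
        have hlt := tau_ff_lt hB hvB
        obtain ⟨h1, h2⟩ := ih (ff G B v) (by omega)
        exact ⟨h1, Relation.ReflTransGen.head ⟨hvB, rfl⟩ h2⟩

variable (G B) in
noncomputable def gg (v : V) : V := gAux G B (tau G B v) v

include hB in
lemma desc_comp {x y b : V} (hx : Desc G B x b) (hy : Desc G B y b) :
    Desc G B x y ∨ Desc G B y x := by
  induction hx using Relation.ReflTransGen.head_induction_on with
  | refl => exact Or.inr hy
  | head hrel hrest ih =>
      rename_i a c
      rcases ih with h | h
      · exact Or.inl (Relation.ReflTransGen.head hrel h)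
      · rcases h.cases_tail with h' | ⟨z, hyz, hzc⟩
        · subst h'
          exact Or.inl (Relation.ReflTransGen.single hrel)
        · have hz : z = a := ff_inj hB hzc.1 hrel.1 (hzc.2.trans hrel.2.symm)
          exact Or.inr (hz ▸ hyz)

include hB in
lemma gg_inj (T : ℕ) : Set.InjOn (gg G B) (Rset G B T 0) := by
  intro v₁ h1 v₂ h2 he
  obtain ⟨hb1, d1⟩ := gAux_spec hB (tau G B v₁) v₁ le_rfl
  obtain ⟨hb2, d2⟩ := gAux_spec hB (tau G B v₂) v₂ le_rfl
  rw [show gAux G B (tau G B v₁) v₁ = gg G B v₁ from rfl, he] at d1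
  have hcomp := desc_comp hB d1 d2
  have key : ∀ a b : V, a ∈ Rset G B T 0 → b ∈ Rset G B T 0 → Desc G B a b → a = b := by
    intro a b ha hb hab
    rcases hab.cases_tail with h' | ⟨z, haz, hzb⟩
    · exact h'.symm
    · have hτz := desc_tau hB haz
      have := hb.2 z hzb.1 hzb.2
      have := ha.1
      omega
  rcases hcomp with h | h
  · exact key _ _ h1 h2 h
  · exact (key _ _ h2 h1 h).symm

include hB in
lemma Rset_card (T : ℕ) : (Rset G B T 0).ncard ≤ B.ncard := by
  have himg : gg G B '' Rset G B T 0 ⊆ B := by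
    rintro _ ⟨v, hv, rfl⟩
    exact (gAux_spec hB (tau G B v) v le_rfl).1
  calc (Rset G B T 0).ncard = (gg G B '' Rset G B T 0).ncard :=
        (Set.ncard_image_of_injOn (gg_inj hB T)).symm
    _ ≤ B.ncard := Set.ncard_le_ncard himg B.toFinite

include hB in
theorem key_construction (T : ℕ)
    (hT : propTime (ZFValid G (Set.univ : Set V)) Set.univ B ≤ 2 * T) :
    ∃ B' : Set V, IsForcingSet (PSDValid G (Set.univ : Set V)) Set.univ B' ∧
      B'.ncard ≤ B.ncard ∧ propTime (PSDValid G (Set.univ : Set V)) Set.univ B' ≤ T := by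
  have hcomp : (Set.univ : Set V) ⊆ iter (PSDValid G (Set.univ : Set V)) (Rset G B T 0) T :=
    (univ_sub_X hB hT).trans (X_subset_iterPSD hB T T)
  exact ⟨Rset G B T 0, ⟨Set.subset_univ _, T, hcomp⟩, Rset_card hB T, Nat.sInf_le hcomp⟩

end ThrAux


/-- `thr₊(G) ≤ m + ⌈pt(G,m)/2⌉` for every `m ≥ Z(G)`. -/
theorem thrplus_le {V : Type*} [Fintype V] [DecidableEq V] (G : SimpleGraph V)
    (m : ℕ) (hm : ZF.Z G ≤ m) :
    ZF.thrplus G ≤ m + (ZF.ptm G m + 1) / 2 := by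
  classical
  by_cases hm' : m ≤ (Set.univ : Set V).ncard
  · have huniv : ZF.IsForcingSet (ZF.ZFValid G Set.univ) Set.univ (Set.univ : Set V) :=
      ⟨subset_rfl, 0, subset_rfl⟩
    have hZne : {n | ∃ B : Set V, B.ncard = n ∧
        ZF.IsForcingSet (ZF.ZFValid G Set.univ) Set.univ B}.Nonempty :=
      ⟨(Set.univ : Set V).ncard, Set.univ, rfl, huniv⟩
    obtain ⟨B₀, hB₀card, hB₀⟩ := Nat.sInf_mem hZne
    have hB₀m : B₀.ncard ≤ m := by
      have : B₀.ncard = ZF.Z G := hB₀card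
      omega
    obtain ⟨S, hsub, -, hScard⟩ :=
      Set.exists_subsuperset_card_eq (Set.subset_univ B₀) hB₀m hm'
    have hS := ThrAux.forcing_mono G hB₀ hsub
    have hptne : {t | ∃ B : Set V, B.ncard = m ∧
        ZF.IsForcingSet (ZF.ZFValid G Set.univ) Set.univ B ∧
        ZF.propTime (ZF.ZFValid G Set.univ) Set.univ B = t}.Nonempty :=
      ⟨_, S, hScard, hS, rfl⟩
    obtain ⟨Bm, hBmcard, hBm, hBmpt⟩ := Nat.sInf_mem hptne
    have hBmpt' : ZF.propTime (ZF.ZFValid G Set.univ) Set.univ Bm = ZF.ptm G m := hBmpt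
    obtain ⟨B', hB', hcard, hpt⟩ :=
      ThrAux.key_construction hBm ((ZF.ptm G m + 1) / 2) (by rw [hBmpt']; omega)
    have hthr : ZF.thrplus G ≤
        B'.ncard + ZF.propTime (ZF.PSDValid G Set.univ) Set.univ B' :=
      Nat.sInf_le ⟨B', hB', rfl⟩
    have hc : B'.ncard ≤ m := hBmcard ▸ hcard
    exact hthr.trans (add_le_add hc hpt)
  · have hpsd : ZF.IsForcingSet (ZF.PSDValid G Set.univ) Set.univ (Set.univ : Set V) :=
      ⟨subset_rfl, 0, subset_rfl⟩
    have h0 : ZF.propTime (ZF.PSDValid G Set.univ) Set.univ (Set.univ : Set V) = 0 :=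
      Nat.sInf_eq_zero.mpr (Or.inl (show (Set.univ : Set V) ⊆ ZF.iter (ZF.PSDValid G Set.univ) Set.univ 0 from subset_rfl))
    have hthr : ZF.thrplus G ≤ (Set.univ : Set V).ncard + 0 :=
      Nat.sInf_le ⟨Set.univ, hpsd, by rw [h0]⟩
    omega
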